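/- Let S be a commutative semigroup with zero and G = Γ(S). Suppose there exist adjacent vertices a, b, a vertex s with N(s) = {a,b}, and a vertex z with d(s,z) = 3. If a is an internal vertex, b is not an internal vertex, and b² ≠ 0, then S \ C(a,b) is a sub-semigroup of S. -/

import Mathlib

/-- A zero-divisor: a nonzero element annihilated by some nonzero element. -/
def IsZeroDivisorElem {S : Type*} [Mul S] [Zero S] (x : S) : Prop :=
  x ≠ 0 ∧ ∃ y : S, y ≠ 0 ∧ x * y = 0

/-- The zero-divisor graph Γ(S) of a commutative semigroup with zero:
vertices are the nonzero zero-divisors, two distinct vertices adjacent iff their product is 0. -/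
def zdGraph (S : Type*) [CommSemigroup S] [Zero S] :
    SimpleGraph {x : S // IsZeroDivisorElem x} where
  Adj a b := a ≠ b ∧ (a : S) * (b : S) = 0
  symm := by
    refine ⟨?_⟩
    rintro a b ⟨h1, h2⟩
    exact ⟨h1.symm, by rwa [mul_comm] at h2⟩
  loopless := by refine ⟨?_⟩; rintro a ⟨h, _⟩; exact h rfl

/-- An end vertex: a vertex of degree one (exactly one neighbor). -/
def IsEndVertex {V : Type*} (G : SimpleGraph V) (v : V) : Prop :=
  ∃! u, G.Adj v u

/-- An internal vertex: degree ≥ 2 and no neighbor of degree 1. -/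
def IsInternal {V : Type*} (G : SimpleGraph V) (v : V) : Prop :=
  (∃ u, G.Adj v u) ∧ ¬ IsEndVertex G v ∧ ∀ u, G.Adj v u → ¬ IsEndVertex G u

/-- C(a,b): the elements of S that are vertices whose neighborhood is exactly {a, b}. -/
def cSet (S : Type*) [CommSemigroup S] [Zero S]
    (a b : {x : S // IsZeroDivisorElem x}) : Set S :=
  {x : S | ∃ h : IsZeroDivisorElem x, (zdGraph S).neighborSet ⟨x, h⟩ = {a, b}}

/-- T_a: the elements of S that are end vertices adjacent to the vertex a. -/
def tSet (S : Type*) [CommSemigroup S] [Zero S]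
    (a : {x : S // IsZeroDivisorElem x}) : Set S :=
  {x : S | ∃ h : IsZeroDivisorElem x,
    (zdGraph S).Adj ⟨x, h⟩ a ∧ IsEndVertex (zdGraph S) ⟨x, h⟩}

/-- If a vertex `v` has neighborhood exactly `{a,b}`, then any nonzero element
annihilating `v` is `v`, `a` or `b`. -/
lemma zd_closure {S : Type*} [CommSemigroup S] [Zero S]
    {v a b : {x : S // IsZeroDivisorElem x}}
    (hN : (zdGraph S).neighborSet v = {a, b}) :
    ∀ w : S, w ≠ 0 → w * (v : S) = 0 → w = (v : S) ∨ w = (a : S) ∨ w = (b : S) := by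
  intro w hw hwv
  by_cases hwc : w = (v : S)
  · exact Or.inl hwc
  · have hzd : IsZeroDivisorElem w := ⟨hw, (v : S), v.2.1, hwv⟩
    have hadj : (zdGraph S).Adj v ⟨w, hzd⟩ :=
      ⟨fun h => hwc (congrArg Subtype.val h).symm, by rw [mul_comm]; exact hwv⟩
    have hmem : (⟨w, hzd⟩ : {x : S // IsZeroDivisorElem x}) ∈ (zdGraph S).neighborSet v := hadj
    rw [hN] at hmem
    rcases hmem with h | h
    · exact Or.inr (Or.inl (congrArg Subtype.val h))
    · exact Or.inr (Or.inr (congrArg Subtype.val h))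

/-- Under condition (△), if a is internal, b is not internal and b² ≠ 0,
then S \ C(a,b) is a sub-semigroup of S. -/
theorem stmt10 {S : Type*} [CommSemigroup S] [Zero S] (hz : ∀ x : S, 0 * x = 0)
    (a b s z : {t : S // IsZeroDivisorElem t})
    (hab : (zdGraph S).Adj a b)
    (hs : (zdGraph S).neighborSet s = {a, b})
    (hd : (zdGraph S).dist s z = 3)
    (ha : IsInternal (zdGraph S) a) (hbint : ¬ IsInternal (zdGraph S) b)
    (hb2 : (b : S) * (b : S) ≠ 0) :
    ∀ x y : S, x ∉ cSet S a b → y ∉ cSet S a b → x * y ∉ cSet S a b := by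
  have hz' : ∀ t : S, t * 0 = 0 := fun t => by rw [mul_comm]; exact hz t
  have hab_ne : a ≠ b := hab.1
  have hab0 : (a : S) * b = 0 := hab.2
  have ha0 : (a : S) ≠ 0 := a.2.1
  -- s is adjacent to a and to b
  have hsa : (zdGraph S).Adj s a := by
    have : a ∈ (zdGraph S).neighborSet s := by rw [hs]; exact Set.mem_insert _ _
    exact this
  have hsb : (zdGraph S).Adj s b := by
    have : b ∈ (zdGraph S).neighborSet s := by
      rw [hs]; exact Set.mem_insert_iff.mpr (Or.inr rfl)
    exact this
  have hs_ne_a : s ≠ a := hsa.ne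
  -- distance facts about z
  have hwalk_short : ∀ p : (zdGraph S).Walk s z, 3 ≤ p.length := by
    intro p
    have := SimpleGraph.dist_le p
    omega
  have hz_ne_s : z ≠ s := by
    rintro rfl
    rw [SimpleGraph.dist_self] at hd
    omega
  have hz_ne_a : z ≠ a := by
    rintro rfl
    have := hwalk_short (SimpleGraph.Walk.cons hsa SimpleGraph.Walk.nil)
    simp at this
  have hz_ne_b : z ≠ b := by
    rintro rfl
    have := hwalk_short (SimpleGraph.Walk.cons hsb SimpleGraph.Walk.nil)
    simp at this
  have hza : (z : S) * a ≠ 0 := by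
    intro h0
    have hadj : (zdGraph S).Adj a z := ⟨Ne.symm hz_ne_a, by rw [mul_comm]; exact h0⟩
    have := hwalk_short (SimpleGraph.Walk.cons hsa (SimpleGraph.Walk.cons hadj SimpleGraph.Walk.nil))
    simp at this
  have hzb : (z : S) * b ≠ 0 := by
    intro h0
    have hadj : (zdGraph S).Adj b z := ⟨Ne.symm hz_ne_b, by rw [mul_comm]; exact h0⟩
    have := hwalk_short (SimpleGraph.Walk.cons hsb (SimpleGraph.Walk.cons hadj SimpleGraph.Walk.nil))
    simp at this
  have hzs : (z : S) * s ≠ 0 := by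
    intro h0
    have hadj : (zdGraph S).Adj s z := ⟨Ne.symm hz_ne_s, by rw [mul_comm]; exact h0⟩
    have := hwalk_short (SimpleGraph.Walk.cons hadj SimpleGraph.Walk.nil)
    simp at this
  have closure_s := zd_closure hs
  -- a middle vertex of a geodesic: a nonzero element annihilating both a and z
  have hmid : ∃ w : S, w ≠ 0 ∧ w * (a : S) = 0 ∧ w * (z : S) = 0 := by
    obtain ⟨p, hp⟩ := SimpleGraph.exists_walk_of_dist_ne_zero (G := zdGraph S) (u := s) (v := z)
      (by rw [hd]; omega)
    rw [hd] at hp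
    cases p with
    | nil => simp at hp
    | cons h1 q =>
      cases q with
      | nil => simp at hp
      | cons h2 r =>
        cases r with
        | nil => simp at hp
        | cons h3 t =>
          cases t with
          | cons h4 t' => simp [SimpleGraph.Walk.length_cons] at hp
          | nil =>
            -- h1 : Adj s u, h2 : Adj u u', h3 : Adj u' z
            rename_i u u'
            have hu : u ∈ (zdGraph S).neighborSet s := h1
            rw [hs] at hu
            rcases hu with rfl | hu
            · -- first step through a
              exact ⟨(u' : S), u'.2.1, by rw [mul_comm]; exact h2.2, h3.2⟩
            · have hub : u = b := hu
              subst hub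
              by_cases hau' : (a : S) * (u' : S) = 0
              · exact ⟨(u' : S), u'.2.1, by rw [mul_comm]; exact hau', h3.2⟩
              · exfalso
                have hws : ((a : S) * (u' : S)) * (s : S) = 0 := by
                  have hcalc : ((a : S) * (u' : S)) * (s : S) = ((s : S) * (a : S)) * (u' : S) := by
                    ac_rfl
                  rw [hcalc, hsa.2, hz]
                have hwz : ((a : S) * (u' : S)) * (z : S) = 0 := by
                  have hcalc : ((a : S) * (u' : S)) * (z : S) = (a : S) * ((u' : S) * (z : S)) :=
                    mul_assoc _ _ _
                  rw [hcalc, h3.2, hz']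
                rcases closure_s _ hau' hws with h | h | h
                · rw [h] at hwz; exact hzs (by rw [mul_comm]; exact hwz)
                · rw [h] at hwz; exact hza (by rw [mul_comm]; exact hwz)
                · rw [h] at hwz; exact hzb (by rw [mul_comm]; exact hwz)
  -- the end vertex e adjacent to b
  have hnot_end_b : ¬ IsEndVertex (zdGraph S) b := by
    rintro ⟨u, _, huniq⟩
    exact hs_ne_a ((huniq s hsb.symm).trans (huniq a hab.symm).symm)
  obtain ⟨e, hbe, he_end⟩ : ∃ e, (zdGraph S).Adj b e ∧ IsEndVertex (zdGraph S) e := by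
    by_contra hno
    push_neg at hno
    exact hbint ⟨⟨a, hab.symm⟩, hnot_end_b, hno⟩
  have he_b : ∀ u, (zdGraph S).Adj e u → u = b := by
    obtain ⟨e₁, _, he_uniq⟩ := he_end
    exact fun u hu => (he_uniq u hu).trans (he_uniq b hbe.symm).symm
  have he_ne_a : e ≠ a := fun h => ha.2.1 (h ▸ he_end)
  have he_ne_b : e ≠ b := hbe.ne'
  -- main argument
  intro x y hxC hyC hcC
  obtain ⟨h, hN⟩ := hcC
  have closure_c : ∀ w : S, w ≠ 0 → w * (x * y) = 0 → w = x * y ∨ w = (a : S) ∨ w = (b : S) :=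
    zd_closure hN
  have hca : (zdGraph S).Adj ⟨x * y, h⟩ a := by
    have : a ∈ (zdGraph S).neighborSet ⟨x * y, h⟩ := by rw [hN]; exact Set.mem_insert _ _
    exact this
  have hx0 : x ≠ 0 := by rintro rfl; exact h.1 (hz y)
  have hy0 : y ≠ 0 := by rintro rfl; exact h.1 (by rw [mul_comm]; exact hz x)
  -- (x*y) * e ≠ 0
  have hce : (x * y) * (e : S) ≠ 0 := by
    intro h0
    rcases closure_c (e : S) e.2.1 (by rw [mul_comm]; exact h0) with hh | hh | hh
    · have hev : e = ⟨x * y, h⟩ := Subtype.ext hh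
      rw [← hev] at hca
      exact hab_ne (he_b a hca)
    · exact he_ne_a (Subtype.ext hh)
    · exact he_ne_b (Subtype.ext hh)
  -- (x*y) * z ≠ 0
  have hcz : (x * y) * (z : S) ≠ 0 := by
    intro h0
    rcases closure_c (z : S) z.2.1 (by rw [mul_comm]; exact h0) with hh | hh | hh
    · have hzv : z = ⟨x * y, h⟩ := Subtype.ext hh
      rw [← hzv] at hca
      exact hza hca.2
    · exact hz_ne_a (Subtype.ext hh)
    · exact hz_ne_b (Subtype.ext hh)
  -- neither factor equals b
  have hne_b : ∀ u v : S, u * v = x * y → u ≠ (b : S) := by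
    intro u v huv heq
    apply hce
    have hcalc : (x * y) * (e : S) = v * (u * (e : S)) := by rw [← huv]; ac_rfl
    rw [hcalc, heq, hbe.2, hz']
  have hx_ne_b : x ≠ (b : S) := hne_b x y rfl
  have hy_ne_b : y ≠ (b : S) := hne_b y x (mul_comm y x)
  -- neither factor equals a
  have hne_a : ∀ u v : S, u * v = x * y → u ≠ (a : S) := by
    intro u v huv heq
    obtain ⟨w, hw0, hwa, hwz⟩ := hmid
    have h1 : w * (x * y) = 0 := by
      have hcalc : w * (x * y) = v * ((a : S) * w) := by rw [← huv, ← heq]; ac_rfl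
      rw [hcalc, mul_comm (a : S) w, hwa, hz']
    rcases closure_c w hw0 h1 with hh | hh | hh
    · exact hcz (hh ▸ hwz)
    · rw [hh] at hwz; exact hza (by rw [mul_comm]; exact hwz)
    · rw [hh] at hwz; exact hzb (by rw [mul_comm]; exact hwz)
  have hx_ne_a : x ≠ (a : S) := hne_a x y rfl
  have hy_ne_a : y ≠ (a : S) := hne_a y x (mul_comm y x)
  -- a factor cannot annihilate both a and b
  have L1 : ∀ u v : S, u * v = x * y → u ∉ cSet S a b → u ≠ 0 → u ≠ (a : S) → u ≠ (b : S) →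
      u * (a : S) = 0 → u * (b : S) = 0 → False := by
    intro u v huv huC hu0 hua hub h0a h0b
    have hzd : IsZeroDivisorElem u := ⟨hu0, (a : S), ha0, h0a⟩
    have hadja : (zdGraph S).Adj ⟨u, hzd⟩ a := ⟨fun hh => hua (congrArg Subtype.val hh), h0a⟩
    have hadjb : (zdGraph S).Adj ⟨u, hzd⟩ b := ⟨fun hh => hub (congrArg Subtype.val hh), h0b⟩
    have hNu : (zdGraph S).neighborSet ⟨u, hzd⟩ ≠ {a, b} := fun hh => huC ⟨hzd, hh⟩
    have hsub : ({a, b} : Set {t : S // IsZeroDivisorElem t}) ⊆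
        (zdGraph S).neighborSet ⟨u, hzd⟩ := by
      intro t ht
      simp only [Set.mem_insert_iff, Set.mem_singleton_iff] at ht
      rcases ht with rfl | rfl
      · exact hadja
      · exact hadjb
    obtain ⟨t, htN, htab⟩ := Set.exists_of_ssubset (hsub.ssubset_of_ne (Ne.symm hNu))
    simp only [Set.mem_insert_iff, Set.mem_singleton_iff, not_or] at htab
    have htadj : (zdGraph S).Adj ⟨u, hzd⟩ t := htN
    have h2 : (t : S) * (x * y) = 0 := by
      have hcalc : (t : S) * (x * y) = (u * (t : S)) * v := by rw [← huv]; ac_rfl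
      rw [hcalc, htadj.2, hz]
    rcases closure_c (t : S) t.2.1 h2 with hh | hh | hh
    · have htv : t = ⟨x * y, h⟩ := Subtype.ext hh
      have hmem : (⟨u, hzd⟩ : {t : S // IsZeroDivisorElem t}) ∈
          (zdGraph S).neighborSet ⟨x * y, h⟩ := by
        rw [← htv]; exact htadj.symm
      rw [hN] at hmem
      rcases hmem with hm | hm
      · exact hua (congrArg Subtype.val hm)
      · exact hub (congrArg Subtype.val hm)
    · exact htab.1 (Subtype.ext hh)
    · exact htab.2 (Subtype.ext hh)
  -- a factor cannot annihilate a
  have step10 : ∀ u v : S, u * v = x * y → u ∉ cSet S a b → u ≠ 0 → u ≠ (a : S) →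
      u ≠ (b : S) → u * (a : S) ≠ 0 := by
    intro u v huv huC hu0 hua hub h0a
    have hzd : IsZeroDivisorElem u := ⟨hu0, (a : S), ha0, h0a⟩
    have hadja : (zdGraph S).Adj ⟨u, hzd⟩ a := ⟨fun hh => hua (congrArg Subtype.val hh), h0a⟩
    have hnotend : ¬ IsEndVertex (zdGraph S) ⟨u, hzd⟩ := ha.2.2 _ hadja.symm
    obtain ⟨t, htadj, hta⟩ : ∃ t, (zdGraph S).Adj ⟨u, hzd⟩ t ∧ t ≠ a := by
      by_contra hno
      push_neg at hno
      exact hnotend ⟨a, hadja, hno⟩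
    have h2 : (t : S) * (x * y) = 0 := by
      have hcalc : (t : S) * (x * y) = (u * (t : S)) * v := by rw [← huv]; ac_rfl
      rw [hcalc, htadj.2, hz]
    rcases closure_c (t : S) t.2.1 h2 with hh | hh | hh
    · have htv : t = ⟨x * y, h⟩ := Subtype.ext hh
      have hmem : (⟨u, hzd⟩ : {t : S // IsZeroDivisorElem t}) ∈
          (zdGraph S).neighborSet ⟨x * y, h⟩ := by
        rw [← htv]; exact htadj.symm
      rw [hN] at hmem
      rcases hmem with hm | hm
      · exact hua (congrArg Subtype.val hm)
      · exact hub (congrArg Subtype.val hm)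
    · exact hta (Subtype.ext hh)
    · have h0b : u * (b : S) = 0 := by
        have := htadj.2
        rwa [hh] at this
      exact L1 u v huv huC hu0 hua hub h0a h0b
  have hxa_ne : x * (a : S) ≠ 0 := step10 x y rfl hxC hx0 hx_ne_a hx_ne_b
  have hya_ne : y * (a : S) ≠ 0 := step10 y x (mul_comm y x) hyC hy0 hy_ne_a hy_ne_b
  -- final contradiction via x*a
  have hfin : (x * (a : S)) * (x * y) = 0 := by
    have hcalc : (x * (a : S)) * (x * y) = x * ((x * y) * (a : S)) := by ac_rfl
    rw [hcalc, hca.2, hz']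
  rcases closure_c (x * (a : S)) hxa_ne hfin with hh | hh | hh
  · -- x*a = x*y : contradict via the middle vertex
    obtain ⟨w, hw0, hwa, hwz⟩ := hmid
    have h3 : w * (x * y) = 0 := by
      have hcalc : w * (x * y) = x * (w * (a : S)) := by rw [← hh]; ac_rfl
      rw [hcalc, hwa, hz']
    rcases closure_c w hw0 h3 with g | g | g
    · exact hcz (g ▸ hwz)
    · rw [g] at hwz; exact hza (by rw [mul_comm]; exact hwz)
    · rw [g] at hwz; exact hzb (by rw [mul_comm]; exact hwz)
  · -- x*a = a : then y*a = 0, contradiction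
    apply hya_ne
    have h4 : (x * (a : S)) * y = (x * y) * (a : S) := by ac_rfl
    rw [hh, hca.2] at h4
    rw [mul_comm]; exact h4
  · -- x*a = b : then b² = 0, contradiction
    apply hb2
    have h5 : (x * (a : S)) * (b : S) = 0 := by
      rw [mul_assoc, hab0, hz']
    rw [hh] at h5
    exact h5
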